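/- Let $E$ be a Banach space carrying a $\mathbb{Z}_p$ action generated by $\sigma$ ($p$ prime) with fixed-point set $F_\sigma=\{U\in E:\sigma U=U\}$, and let $A\subset E$ be a compact closed set such that $\mathbb{Z}_p(A):=\bigcup_{i=0}^{p-1}\sigma^i(A)\subset E\setminus F_\sigma$ and $\bigcap_{i=0}^{p-1}\sigma^i(A)=\emptyset$. Then $\gamma(\mathbb{Z}_p(A))\le p-1$. -/

import Mathlib

open Finset

noncomputable section

namespace ZpIndexAux

def om (p : ℕ) : ℂ := Complex.exp (2 * Real.pi * Complex.I / p)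

lemma om_ne_zero (p : ℕ) : om p ≠ 0 := Complex.exp_ne_zero _

lemma twopiI_ne_zero : (2 * (Real.pi : ℂ) * Complex.I) ≠ 0 :=
  mul_ne_zero (mul_ne_zero two_ne_zero (by exact_mod_cast Real.pi_ne_zero)) Complex.I_ne_zero

lemma om_pow_p {p : ℕ} (hp : 0 < p) : om p ^ p = 1 := by
  have hp0 : (p : ℂ) ≠ 0 := Nat.cast_ne_zero.mpr hp.ne'
  rw [om, ← Complex.exp_nat_mul]
  have : (p : ℂ) * (2 * Real.pi * Complex.I / p) = 2 * Real.pi * Complex.I := by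
    field_simp
  rw [this, Complex.exp_two_pi_mul_I]

lemma om_pow_mod {p : ℕ} (hp : 0 < p) (a : ℕ) : om p ^ a = om p ^ (a % p) := by
  conv_lhs => rw [← Nat.div_add_mod a p]
  rw [pow_add, pow_mul, om_pow_p hp, one_pow, one_mul]

lemma om_pow_congr {p : ℕ} (hp : 0 < p) {a b : ℕ} (h : a % p = b % p) :
    om p ^ a = om p ^ b := by
  rw [om_pow_mod hp a, om_pow_mod hp b, h]

lemma om_pow_inj {p : ℕ} (hp : 0 < p) {j k : ℕ} (hj : j < p) (hk : k < p)
    (h : om p ^ j = om p ^ k) : j = k := by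
  have hc : ∀ n : ℕ, om p ^ n = Complex.exp (n * (2 * Real.pi * Complex.I / p)) :=
    fun n => (Complex.exp_nat_mul _ n).symm
  rw [hc, hc, Complex.exp_eq_exp_iff_exists_int] at h
  obtain ⟨n, hn⟩ := h
  have hp0 : (p : ℂ) ≠ 0 := Nat.cast_ne_zero.mpr hp.ne'
  have key : ((j : ℂ) - k - n * p) * (2 * Real.pi * Complex.I) = 0 := by
    have e : ((j : ℂ) - k - n * p) * (2 * Real.pi * Complex.I)
        = ((j : ℂ) * (2 * Real.pi * Complex.I / p)
            - ((k : ℂ) * (2 * Real.pi * Complex.I / p) + n * (2 * Real.pi * Complex.I))) * p := by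
      field_simp
      ring
    rw [e, ← hn, sub_self, zero_mul]
  have hz : (j : ℂ) - k - n * p = 0 := by
    rcases mul_eq_zero.mp key with h' | h'
    · exact h'
    · exact absurd h' twopiI_ne_zero
  have hzz : (j : ℤ) - k - n * p = 0 := by exact_mod_cast hz
  have hd : (p : ℤ) ∣ (j : ℤ) - k := ⟨n, by linarith⟩
  have := Int.eq_zero_of_abs_lt_dvd hd (by rw [abs_lt]; omega)
  omega

lemma geom_self (p : ℕ) (j : ℕ) :
    ∑ m ∈ range p, (om p ^ j * (om p ^ j)⁻¹) ^ m = p := by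
  rw [mul_inv_cancel₀ (pow_ne_zero _ (om_ne_zero p))]
  simp

lemma geom_zero {p : ℕ} (hp : 0 < p) {j k : ℕ} (hj : j < p) (hk : k < p) (hne : j ≠ k) :
    ∑ m ∈ range p, (om p ^ j * (om p ^ k)⁻¹) ^ m = 0 := by
  set z := om p ^ j * (om p ^ k)⁻¹ with hz
  have hz1 : z ≠ 1 := by
    intro h
    exact hne (om_pow_inj hp hj hk ((mul_inv_eq_one₀ (pow_ne_zero _ (om_ne_zero p))).mp h))
  have hj1 : (om p ^ j) ^ p = 1 := by
    rw [← pow_mul, mul_comm, pow_mul, om_pow_p hp, one_pow]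
  have hk1 : (om p ^ k) ^ p = 1 := by
    rw [← pow_mul, mul_comm, pow_mul, om_pow_p hp, one_pow]
  have hzp : z ^ p = 1 := by
    rw [hz, mul_pow, hj1, inv_pow, hk1, inv_one, one_mul]
  rw [geom_sum_eq hz1, hzp, sub_self, zero_div]

variable {E : Type*} [NormedAddCommGroup E]

lemma iterate_mod {σ : E → E} {p : ℕ} (hσp : σ^[p] = id) (n : ℕ) :
    σ^[n] = σ^[n % p] := by
  conv_lhs => rw [← Nat.div_add_mod n p]
  rw [Function.iterate_add, Function.iterate_mul, hσp, Function.iterate_id, Function.id_comp]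

def SS (σ : E → E) (p : ℕ) [NeZero p] (k : ZMod p) (x : E) : E := σ^[k.val] x

def gg (A : Set E) (x : E) : ℂ := (Metric.infDist x A : ℝ)

def hh (σ : E → E) (p : ℕ) [NeZero p] (A : Set E) (m : ℕ) (x : E) : ℂ :=
  ∑ k : ZMod p, ((om p ^ k.val)⁻¹) ^ m * gg A (SS σ p k x)

variable {σ : E → E} {p : ℕ} [NeZero p] {A : Set E}

lemma SS_comp (hσp : σ^[p] = id) (j k : ZMod p) (x : E) :
    SS σ p j (SS σ p k x) = SS σ p (j + k) x := by
  unfold SS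
  rw [← Function.iterate_add_apply, ZMod.val_add, ← iterate_mod hσp]

lemma SS_zero (x : E) : SS σ p 0 x = x := by
  simp [SS, ZMod.val_zero]

lemma SS_val_succ (hσp : σ^[p] = id) (hp1 : 1 < p) (k : ZMod p) (x : E) :
    SS σ p (k + 1) x = σ^[k.val + 1] x := by
  haveI := Fact.mk hp1
  unfold SS
  rw [ZMod.val_add, ZMod.val_one, ← iterate_mod hσp]

lemma om_pow_val_succ (hp1 : 1 < p) (k : ZMod p) :
    om p ^ (k + 1).val = om p ^ k.val * om p := by
  haveI := Fact.mk hp1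
  have h0 : 0 < p := by omega
  rw [← pow_succ]
  apply om_pow_congr h0
  rw [ZMod.val_add, ZMod.val_one]
  exact Nat.mod_mod_of_dvd _ dvd_rfl

lemma hh_equiv (hσp : σ^[p] = id) (hp1 : 1 < p) (m : ℕ) (x : E) :
    hh σ p A m (σ x) = om p ^ m * hh σ p A m x := by
  unfold hh
  rw [Finset.mul_sum]
  apply Fintype.sum_bijective (fun k : ZMod p => k + 1) (Equiv.addRight 1).bijective
  intro k
  have h1 : SS σ p k (σ x) = SS σ p (k + 1) x := by
    rw [SS_val_succ hσp hp1]
    simp [SS, Function.iterate_succ_apply]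
  rw [h1]
  have h2 : ((om p ^ k.val)⁻¹ : ℂ) ^ m = om p ^ m * ((om p ^ (k + 1).val)⁻¹) ^ m := by
    rw [om_pow_val_succ hp1 k]
    have ha : (om p : ℂ) ≠ 0 := om_ne_zero p
    have hb : (om p ^ k.val : ℂ) ≠ 0 := pow_ne_zero _ ha
    field_simp
    rw [← mul_pow, mul_one_div, mul_comm (om p ^ k.val), ← div_div, div_self ha]
  rw [h2, mul_assoc]

lemma dft (hσp : σ^[p] = id) (hp1 : 1 < p) (x : E) (j : ZMod p) :
    ∑ m ∈ range p, (om p ^ j.val) ^ m * hh σ p A m x = p * gg A (SS σ p j x) := by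
  have h0 : 0 < p := by omega
  unfold hh
  calc ∑ m ∈ range p, (om p ^ j.val) ^ m * ∑ k : ZMod p, ((om p ^ k.val)⁻¹) ^ m * gg A (SS σ p k x)
      = ∑ m ∈ range p, ∑ k : ZMod p, (om p ^ j.val * (om p ^ k.val)⁻¹) ^ m * gg A (SS σ p k x) := by
        refine Finset.sum_congr rfl fun m _ => ?_
        rw [Finset.mul_sum]
        refine Finset.sum_congr rfl fun k _ => ?_
        rw [mul_pow]; ring
    _ = ∑ k : ZMod p, ∑ m ∈ range p, (om p ^ j.val * (om p ^ k.val)⁻¹) ^ m * gg A (SS σ p k x) :=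
        Finset.sum_comm
    _ = ∑ k : ZMod p, (∑ m ∈ range p, (om p ^ j.val * (om p ^ k.val)⁻¹) ^ m) * gg A (SS σ p k x) := by
        refine Finset.sum_congr rfl fun k _ => ?_
        rw [Finset.sum_mul]
    _ = p * gg A (SS σ p j x) := by
        rw [Finset.sum_eq_single j]
        · rw [geom_self]
        · intro k _ hk
          rw [geom_zero h0 (ZMod.val_lt j) (ZMod.val_lt k)
            (fun h => hk (ZMod.val_injective p h).symm), zero_mul]
        · intro h; exact absurd (Finset.mem_univ j) h

lemma nonvanish (hσp : σ^[p] = id) (hp1 : 1 < p) (x : E) (j jj : ZMod p)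
    (hne : gg A (SS σ p j x) ≠ gg A (SS σ p jj x)) :
    ∃ m, 0 < m ∧ m < p ∧ hh σ p A m x ≠ 0 := by
  by_contra hc
  push_neg at hc
  have key : ∀ jx : ZMod p, (p : ℂ) * gg A (SS σ p jx x) = hh σ p A 0 x := by
    intro jx
    rw [← dft hσp hp1 x jx, Finset.sum_eq_single 0]
    · rw [pow_zero, one_mul]
    · intro m hm hm0
      rw [hc m (Nat.pos_of_ne_zero hm0) (mem_range.mp hm), mul_zero]
    · intro h; exact absurd (mem_range.mpr (by omega)) h
  have hp0 : (p : ℂ) ≠ 0 := Nat.cast_ne_zero.mpr (by omega)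
  exact hne (mul_left_cancel₀ hp0 (by rw [key j, key jj]))

lemma hh_cont (hσc : Continuous σ) (m : ℕ) : Continuous (hh σ p A m) := by
  unfold hh gg SS
  exact continuous_finset_sum _ fun k _ => continuous_const.mul
    ((Complex.continuous_ofReal.comp (Metric.continuous_infDist_pt A)).comp (hσc.iterate _))

end ZpIndexAux

/-- The `ℤ_p`-orbit `ℤ_p(A) = ⋃_{i=0}^{p-1} σⁱ(A)` of a set `A` under the generator
`σ` of a `ℤ_p`-action. -/
def ZpOrbit {E : Type*} (σ : E → E) (p : ℕ) (A : Set E) : Set E :=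
  ⋃ i ∈ Finset.range p, (σ^[i]) '' A

open ZpIndexAux

set_option maxHeartbeats 1000000

/-- **Property of the `ℤ_p`-index.** Let `E` be a Banach space carrying a `ℤ_p`-action
(`p` prime) generated by a continuous `σ` with `σ^p = id`, and let `A ⊆ E` be a
compact closed set such that `ℤ_p(A) ⊆ E \ F_σ` (no point of the orbit of `A` is fixed
by `σ`) and `⋂_{i=0}^{p-1} σⁱ(A) = ∅`.  Then `γ(ℤ_p(A)) ≤ p - 1`, i.e. there is a
continuous map `h : ℤ_p(A) → ℂ^{p-1} \ {0}` with `h(σU) = e^{2πi/p} h(U)`. -/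
theorem zp_index_of_orbit_le
    {E : Type*} [NormedAddCommGroup E] [NormedSpace ℝ E] [CompleteSpace E]
    {p : ℕ} (hp : p.Prime)
    (σ : E → E) (hσc : Continuous σ) (hσp : σ^[p] = id)
    (A : Set E) (hAcpt : IsCompact A) (hAcl : IsClosed A)
    (hfree : ∀ x ∈ ZpOrbit σ p A, σ x ≠ x)
    (hcap : ⋂ i ∈ Finset.range p, (σ^[i]) '' A = ∅) :
    ∃ h : E → Fin (p - 1) → ℂ,
      ContinuousOn h (ZpOrbit σ p A) ∧
      (∀ x ∈ ZpOrbit σ p A, h x ≠ 0) ∧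
      ∀ x ∈ ZpOrbit σ p A,
        h (σ x) = fun m => Complex.exp (2 * Real.pi * Complex.I / p) * h x m := by
  classical
  haveI : NeZero p := ⟨hp.pos.ne'⟩
  haveI := Fact.mk hp.one_lt
  have hp1 : 1 < p := hp.one_lt
  have h0 : 0 < p := hp.pos
  refine ⟨fun x m => hh σ p A (m.val + 1) x ^ (((m.val + 1 : ℕ) : ZMod p))⁻¹.val,
    ?_, ?_, ?_⟩
  · have hc : Continuous (fun x : E => fun m : Fin (p-1) =>
        hh σ p A (m.val + 1) x ^ (((m.val + 1 : ℕ) : ZMod p))⁻¹.val) :=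
      continuous_pi fun m => (hh_cont hσc (m.val + 1)).pow _
    exact hc.continuousOn
  · -- nonvanishing
    intro x hx
    simp only [ZpOrbit, Set.mem_iUnion, mem_range, Set.mem_image] at hx
    obtain ⟨i, hi, a, ha, hxa⟩ := hx
    have ha' : a ∉ ⋂ i ∈ range p, σ^[i] '' A := by
      rw [hcap]; exact Set.notMem_empty a
    simp only [Set.mem_iInter, mem_range, Set.mem_image, not_forall, not_exists] at ha'
    obtain ⟨i0, hi0, hno⟩ := ha'
    set b0 : ZMod p := -(i0 : ZMod p) with hb0
    have hiter : ∀ (n : ℕ) (hn : n < p) (y : E), σ^[n] y = SS σ p (n : ZMod p) y := by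
      intro n hn y
      simp [SS, ZMod.val_cast_of_lt hn]
    have hb : SS σ p b0 a ∉ A := by
      intro hmem
      exact hno (SS σ p b0 a)
        ⟨hmem, by rw [hiter i0 hi0, SS_comp hσp, add_neg_cancel, SS_zero]⟩
    have hxa' : x = SS σ p (i : ZMod p) a := by rw [← hxa, hiter i hi]
    have hSj : SS σ p (-(i : ZMod p)) x = a := by
      rw [hxa', SS_comp hσp, neg_add_cancel, SS_zero]
    have hSjj : SS σ p (b0 - (i : ZMod p)) x = SS σ p b0 a := by
      rw [hxa', SS_comp hσp, sub_add_cancel]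
    have hgg : gg A (SS σ p (-(i : ZMod p)) x) ≠ gg A (SS σ p (b0 - (i : ZMod p)) x) := by
      rw [hSj, hSjj]
      have h1 : Metric.infDist a A = 0 := Metric.infDist_zero_of_mem ha
      have h2 : 0 < Metric.infDist (SS σ p b0 a) A :=
        (hAcl.notMem_iff_infDist_pos ⟨a, ha⟩).1 hb
      simp only [gg, Ne, Complex.ofReal_inj]
      intro heq
      rw [h1] at heq
      linarith
    obtain ⟨m, hm0, hmp, hmne⟩ := nonvanish hσp hp1 x _ _ hgg
    intro hH0
    have h2 := congrFun hH0 (⟨m - 1, by omega⟩ : Fin (p - 1))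
    simp only [Pi.zero_apply, Fin.val_mk] at h2
    have hmm : m - 1 + 1 = m := by omega
    rw [hmm] at h2
    exact pow_ne_zero _ hmne h2
  · -- equivariance
    intro x _
    funext m
    show hh σ p A (m.val + 1) (σ x) ^ (((m.val + 1 : ℕ) : ZMod p))⁻¹.val = _
    rw [hh_equiv hσp hp1, mul_pow, ← pow_mul]
    have hnd : ¬ p ∣ (m.val + 1) := by
      intro hdvd
      have hle : m.val + 1 ≤ p - 1 := by omega
      have := Nat.le_of_dvd (by omega) hdvd
      omega
    have hcop : Nat.Coprime (m.val + 1) p := ((hp.coprime_iff_not_dvd).mpr hnd).symm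
    have hunit : IsUnit ((m.val + 1 : ℕ) : ZMod p) :=
      ⟨ZMod.unitOfCoprime _ hcop, ZMod.coe_unitOfCoprime _ _⟩
    have hmulinv : ((m.val + 1 : ℕ) : ZMod p) * (((m.val + 1 : ℕ) : ZMod p))⁻¹ = 1 :=
      ZMod.mul_inv_of_unit _ hunit
    have hcast : (((m.val + 1) * (((m.val + 1 : ℕ) : ZMod p))⁻¹.val : ℕ) : ZMod p)
        = ((1 : ℕ) : ZMod p) := by
      push_cast
      rw [ZMod.natCast_val, ZMod.cast_id]
      simpa using hmulinv
    have hmod := (ZMod.natCast_eq_natCast_iff _ _ _).mp hcast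
    rw [om_pow_congr h0 hmod, pow_one]
    rfl

end
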